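/- Soundness of negative FDD restriction: for every FDD d, field f, value n, packet pk, and list of packets h, ⟦d|_{f≠n}⟧ (pk::h) equals ∅ if pk f = n, and equals ⟦d⟧ (pk::h) otherwise. -/

import Mathlib

namespace NetKAT

/-- Packets: assignments of (natural-number) values to fields. -/
abbrev Packet (F : Type) := F → ℕ

/-- Histories: a nonempty list of packets, represented as (head packet, tail). -/
abbrev Hist (F : Type) := Packet F × List (Packet F)

/-- NetKAT predicates. -/
inductive Pred (F : Type) where
  | id : Pred F
  | drop : Pred F
  | test : F → ℕ → Pred F
  | or : Pred F → Pred F → Pred F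
  | and : Pred F → Pred F → Pred F
  | not : Pred F → Pred F

/-- NetKAT programs. -/
inductive Pol (F : Type) where
  | filter : Pred F → Pol F
  | mod : F → ℕ → Pol F
  | union : Pol F → Pol F → Pol F
  | seq : Pol F → Pol F → Pol F
  | star : Pol F → Pol F
  | dup : Pol F

/-- Iterates of a packet-processing function: `iterRel f 0 h = {h}` and
    `iterRel f (i+1) h = ⋃ h' ∈ f h, iterRel f i h'`. -/
def iterRel {F : Type} (f : Hist F → Set (Hist F)) : ℕ → Hist F → Set (Hist F)
  | 0, h => {h}
  | i+1, h => ⋃ h' ∈ f h, iterRel f i h'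

/-- Semantics of predicates (as filters on histories). -/
def predSem {F : Type} : Pred F → Hist F → Set (Hist F)
  | .id, h => {h}
  | .drop, _ => ∅
  | .test f n, h => if h.1 f = n then {h} else ∅
  | .or a b, h => predSem a h ∪ predSem b h
  | .and a b, h => ⋃ h' ∈ predSem a h, predSem b h'
  | .not a, h => {h} \ predSem a h

/-- Semantics of NetKAT programs: a history is mapped to a set of histories. -/
def polSem {F : Type} [DecidableEq F] : Pol F → Hist F → Set (Hist F)
  | .filter a, h => predSem a h
  | .mod f n, h => {(Function.update h.1 f n, h.2)}
  | .union p q, h => polSem p h ∪ polSem q h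
  | .seq p q, h => ⋃ h' ∈ polSem p h, polSem q h'
  | .star p, h => ⋃ i : ℕ, iterRel (fun h' => polSem p h') i h
  | .dup, h => {(h.1, h.1 :: h.2)}

/-- A program is dup-free if it contains no occurrence of `dup`. -/
def Pol.dupFree {F : Type} : Pol F → Prop
  | .filter _ => True
  | .mod _ _ => True
  | .union p q => p.dupFree ∧ q.dupFree
  | .seq p q => p.dupFree ∧ q.dupFree
  | .star p => p.dupFree
  | .dup => False

/-- Actions: finite partial maps from fields to values. -/
abbrev Act (F : Type) := F → Option ℕ

/-- Apply an action to a packet. -/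
def applyAct {F : Type} (a : Act F) (pk : Packet F) : Packet F :=
  fun f => (a f).getD (pk f)

/-- Semantics of an action on a history. -/
def actSem {F : Type} (a : Act F) (h : Hist F) : Set (Hist F) :=
  {(applyAct a h.1, h.2)}

/-- Forwarding decision diagrams. -/
inductive FDD (F : Type) where
  | const : Finset (Act F) → FDD F
  | cond : F → ℕ → FDD F → FDD F → FDD F

/-- Semantics of FDDs. -/
def fddSem {F : Type} : FDD F → Hist F → Set (Hist F)
  | .const s, h => ⋃ a ∈ s, actSem a h
  | .cond f n d1 d2, h => if h.1 f = n then fddSem d1 h else fddSem d2 h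

variable {F : Type} [Fintype F] [LinearOrder F]

/-- FDD union `d₁ ⊕ d₂`. -/
def fddUnion : FDD F → FDD F → FDD F
  | .const s1, .const s2 => .const (s1 ∪ s2)
  | .cond f n d1 d2, .const s =>
      .cond f n (fddUnion d1 (.const s)) (fddUnion d2 (.const s))
  | .const s, .cond f n d1 d2 =>
      .cond f n (fddUnion (.const s) d1) (fddUnion (.const s) d2)
  | .cond f1 n1 d11 d12, .cond f2 n2 d21 d22 =>
    if f1 = f2 then
      if n1 = n2 then .cond f1 n1 (fddUnion d11 d21) (fddUnion d12 d22)
      else if n1 < n2 then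
        .cond f1 n1 (fddUnion d11 d22) (fddUnion d12 (.cond f2 n2 d21 d22))
      else
        .cond f2 n2 (fddUnion d12 d21) (fddUnion (.cond f1 n1 d11 d12) d22)
    else if f1 < f2 then
      .cond f1 n1 (fddUnion d11 (.cond f2 n2 d21 d22)) (fddUnion d12 (.cond f2 n2 d21 d22))
    else
      .cond f2 n2 (fddUnion (.cond f1 n1 d11 d12) d21) (fddUnion (.cond f1 n1 d11 d12) d22)
termination_by d1 d2 => sizeOf d1 + sizeOf d2
decreasing_by all_goals (simp <;> omega)

/-- Positive restriction `d|_{f=n}`. -/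
def restrictPos (f : F) (n : ℕ) : FDD F → FDD F
  | .const s => .cond f n (.const s) (.const ∅)
  | .cond f1 n1 d1 d2 =>
    if f1 = f then
      if n1 = n then .cond f n d1 (.const ∅)
      else restrictPos f n d2
    else if f < f1 then .cond f n (.cond f1 n1 d1 d2) (.const ∅)
    else .cond f1 n1 (restrictPos f n d1) (restrictPos f n d2)

/-- Negative restriction `d|_{f≠n}`. -/
def restrictNeg (f : F) (n : ℕ) : FDD F → FDD F
  | .const s => .cond f n (.const ∅) (.const s)
  | .cond f1 n1 d1 d2 =>
    if f1 = f then
      if n1 = n then .cond f n (.const ∅) d2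
      else .cond f1 n1 d1 (restrictNeg f n d2)
    else if f < f1 then .cond f n (.const ∅) (.cond f1 n1 d1 d2)
    else .cond f1 n1 (restrictNeg f n d1) (restrictNeg f n d2)

/-- Sequencing of actions `a ; a'`: agrees with `a'` on the domain of `a'`, with `a` elsewhere. -/
def actSeq (a a' : Act F) : Act F :=
  fun f => (a' f).orElse (fun _ => a f)

/-- Sequencing of an action with an FDD, `a ⊙ d`. -/
def actSeqFDD (a : Act F) : FDD F → FDD F
  | .const s => .const (s.image (actSeq a))
  | .cond f n d1 d2 =>
    match a f with
    | some m => if m = n then actSeqFDD a d1 else actSeqFDD a d2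
    | none => .cond f n (actSeqFDD a d1) (actSeqFDD a d2)

/-- FDD sequencing `d₁ ⊙ d₂`. -/
noncomputable def fddSeq : FDD F → FDD F → FDD F
  | .const s, d => (s.toList.map (fun a => actSeqFDD a d)).foldr fddUnion (.const ∅)
  | .cond f n d1 d2, d =>
      fddUnion (restrictPos f n (fddSeq d1 d)) (restrictNeg f n (fddSeq d2 d))

/-- The empty action `⊥`. -/
def emptyAct : Act F := fun _ => none

/-- FDD negation. -/
def fddNeg : FDD F → FDD F
  | .const s => if s = ∅ then .const {emptyAct} else .const ∅
  | .cond f n d1 d2 => .cond f n (fddNeg d1) (fddNeg d2)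

/-- A boolean FDD: every constant diagram occurring in it is `∅` or `{⊥}`. -/
def FDD.boolean : FDD F → Prop
  | .const s => s = ∅ ∨ s = {emptyAct}
  | .cond _ _ d1 d2 => d1.boolean ∧ d2.boolean

/-- The action `{f ← n}` assigning `n` to `f` and undefined elsewhere. -/
def singleAct (f : F) (n : ℕ) : Act F := fun f' => if f' = f then some n else none

/-- Iteration used to compile Kleene star: `e₀ = {⊥}` and `e_{i+1} = {⊥} ⊕ (d ⊙ e_i)`. -/
noncomputable def starIter (d : FDD F) : ℕ → FDD F
  | 0 => .const {emptyAct}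
  | i+1 => fddUnion (.const {emptyAct}) (fddSeq d (starIter d i))

/-- The compilation relation between (dup-free) NetKAT programs and FDDs. -/
inductive Compiles : Pol F → FDD F → Prop where
  | drop : Compiles (.filter .drop) (.const ∅)
  | id : Compiles (.filter .id) (.const {emptyAct})
  | mod (f : F) (n : ℕ) : Compiles (.mod f n) (.const {singleAct f n})
  | test (f : F) (n : ℕ) :
      Compiles (.filter (.test f n)) (.cond f n (.const {emptyAct}) (.const ∅))
  | not {a : Pred F} {d : FDD F} :
      Compiles (.filter a) d → Compiles (.filter (.not a)) (fddNeg d)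
  | por {a b : Pred F} {d1 d2 : FDD F} :
      Compiles (.filter a) d1 → Compiles (.filter b) d2 →
      Compiles (.filter (.or a b)) (fddUnion d1 d2)
  | pand {a b : Pred F} {d1 d2 : FDD F} :
      Compiles (.filter a) d1 → Compiles (.filter b) d2 →
      Compiles (.filter (.and a b)) (fddSeq d1 d2)
  | union {p q : Pol F} {d1 d2 : FDD F} :
      Compiles p d1 → Compiles q d2 → Compiles (.union p q) (fddUnion d1 d2)
  | seq {p q : Pol F} {d1 d2 : FDD F} :
      Compiles p d1 → Compiles q d2 → Compiles (.seq p q) (fddSeq d1 d2)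
  | star {p : Pol F} {d : FDD F} {N : ℕ} :
      Compiles p d → starIter d (N + 1) = starIter d N →
      Compiles (.star p) (starIter d N)

/-- **Soundness of negative FDD restriction.** -/
theorem restrictNeg_sound (d : FDD F) (f : F) (n : ℕ)
    (pk : Packet F) (h : List (Packet F)) :
    fddSem (restrictNeg f n d) (pk, h) =
      if pk f = n then ∅ else fddSem d (pk, h) := by
  induction d with
  | const s =>
      simp only [restrictNeg, fddSem]
      split <;> simp_all [fddSem]
  | cond f1 n1 d1 d2 ih1 ih2 =>
      simp only [restrictNeg]
      by_cases hf : f1 = f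
      · subst hf
        by_cases hn : n1 = n
        · subst hn
          simp only [if_pos rfl, fddSem]
          split <;> simp_all [fddSem]
        · simp only [if_pos rfl, if_neg hn, fddSem, ih2]
          by_cases hp : pk f1 = n1
          · simp [hp, fddSem, hn]
          · simp [hp, fddSem, ih2]
      · by_cases hlt : f < f1
        · simp only [if_neg hf, if_pos hlt, fddSem]
          split <;> simp_all [fddSem]
        · simp only [if_neg hf, if_neg hlt, fddSem, ih1, ih2]
          split <;> simp [fddSem]

end NetKAT
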